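/- Let M = (E, I) be a matroid, S ⊆ E, and w : E → ℝ≥0 such that every e ∈ E \ S satisfies e ∈ spn({f ∈ S : w(f) ≥ w(e)}). Then a maximum-weight independent set of M restricted to S is also a maximum-weight independent set of M over all of E. -/

import Mathlib

open Finset
open scoped Classical

structure FinMatroid (α : Type) [DecidableEq α] where
  E : Finset α
  Indep : Finset α → Prop
  indep_empty : Indep ∅
  subset_ground : ∀ ⦃X⦄, Indep X → X ⊆ E
  indep_mono : ∀ ⦃X Y⦄, X ⊆ Y → Indep Y → Indep X
  indep_exchange : ∀ ⦃X Y⦄, Indep X → Indep Y → X.card < Y.card →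
    ∃ e ∈ Y \ X, Indep (insert e X)

namespace FinMatroid

variable {α : Type} [DecidableEq α]

noncomputable def rank (M : FinMatroid α) (X : Finset α) : ℕ :=
  sSup {n | ∃ Y ⊆ X, M.Indep Y ∧ Y.card = n}

def spn (M : FinMatroid α) (X : Finset α) : Set α :=
  {e | e ∈ M.E ∧ M.rank (insert e X) = M.rank X}

end FinMatroid

namespace StmtAux

variable {α : Type} [DecidableEq α] (M : FinMatroid α)

lemma rank_set_nonempty (X : Finset α) :
    {n | ∃ Y ⊆ X, M.Indep Y ∧ Y.card = n}.Nonempty :=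
  ⟨0, ∅, Finset.empty_subset X, M.indep_empty, rfl⟩

lemma rank_set_bdd (X : Finset α) :
    BddAbove {n | ∃ Y ⊆ X, M.Indep Y ∧ Y.card = n} := by
  refine ⟨X.card, fun n hn => ?_⟩
  obtain ⟨Y, hYX, _, hc⟩ := hn
  exact hc ▸ Finset.card_le_card hYX

lemma rank_spec (X : Finset α) : ∃ Y ⊆ X, M.Indep Y ∧ Y.card = M.rank X :=
  Nat.sSup_mem (rank_set_nonempty M X) (rank_set_bdd M X)

lemma card_le_rank {X Y : Finset α} (hYX : Y ⊆ X) (hY : M.Indep Y) :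
    Y.card ≤ M.rank X :=
  le_csSup (rank_set_bdd M X) ⟨Y, hYX, hY, rfl⟩

/-- Any independent subset of `Z` extends to a maximum independent subset of `Z`. -/
lemma exists_basis_superset {Z : Finset α} :
    ∀ n B, B ⊆ Z → M.Indep B → M.rank Z - B.card ≤ n →
      ∃ B', B ⊆ B' ∧ B' ⊆ Z ∧ M.Indep B' ∧ B'.card = M.rank Z := by
  intro n
  induction n with
  | zero =>
    intro B hBZ hB h
    have h1 : M.rank Z ≤ B.card := Nat.le_of_sub_eq_zero (Nat.le_zero.mp h)
    have h2 : B.card ≤ M.rank Z := card_le_rank M hBZ hB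
    exact ⟨B, subset_rfl, hBZ, hB, le_antisymm h2 h1⟩
  | succ n ih =>
    intro B hBZ hB h
    by_cases hc : M.rank Z ≤ B.card
    · exact ⟨B, subset_rfl, hBZ, hB, le_antisymm (card_le_rank M hBZ hB) hc⟩
    · push_neg at hc
      obtain ⟨C, hCZ, hC, hCcard⟩ := rank_spec M Z
      have hlt : B.card < C.card := by omega
      obtain ⟨e, he, hBe⟩ := M.indep_exchange hB hC hlt
      have heC : e ∈ C := (Finset.mem_sdiff.mp he).1
      have heB : e ∉ B := (Finset.mem_sdiff.mp he).2
      have hsub : insert e B ⊆ Z := Finset.insert_subset (hCZ heC) hBZ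
      have hcard : (insert e B).card = B.card + 1 := Finset.card_insert_of_notMem heB
      obtain ⟨B', h1, h2, h3, h4⟩ := ih (insert e B) hsub hBe (by omega)
      exact ⟨B', (Finset.subset_insert e B).trans h1, h2, h3, h4⟩

/-- Key replacement lemma: if `e ∈ I` is independent and `e` is spanned by `A`,
then some `a ∈ A \ I` can replace `e` in `I`. -/
lemma replace {I A : Finset α} {e : α} (hI : M.Indep I) (heI : e ∈ I)
    (heA : e ∉ A) (he : e ∈ M.spn A) :
    ∃ a ∈ A, a ∉ I ∧ M.Indep (insert a (I.erase e)) := by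
  by_contra hcon
  push_neg at hcon
  set J := I.erase e with hJ
  have hJI : J ⊆ I := Finset.erase_subset e I
  have hJindep : M.Indep J := M.indep_mono hJI hI
  have heJ : e ∉ J := Finset.notMem_erase e I
  -- no a ∈ A \ J gives insert a J independent
  have hno : ∀ a ∈ A, a ∉ J → ¬ M.Indep (insert a J) := by
    intro a ha haJ hind
    have haI : a ∉ I := by
      intro haI
      have : a ∈ J := Finset.mem_erase.mpr ⟨fun h => heA (h ▸ ha), haI⟩
      exact haJ this
    exact hcon a ha haI hind
  -- rank (A ∪ J) = J.card
  have hrAJ : M.rank (A ∪ J) = J.card := by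
    obtain ⟨K, hKZ, hK, hKcard⟩ := rank_spec M (A ∪ J)
    refine le_antisymm ?_ (card_le_rank M Finset.subset_union_right hJindep)
    rw [← hKcard]
    by_contra hlt
    push_neg at hlt
    obtain ⟨a, ha, haind⟩ := M.indep_exchange hJindep hK hlt
    have haK : a ∈ K := (Finset.mem_sdiff.mp ha).1
    have haJ : a ∉ J := (Finset.mem_sdiff.mp ha).2
    have haA : a ∈ A := by
      rcases Finset.mem_union.mp (hKZ haK) with h | h
      · exact h
      · exact absurd h haJ
    exact hno a haA haJ haind
  -- a basis B of A extends to a basis B' of A ∪ J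
  obtain ⟨B, hBA, hB, hBcard⟩ := rank_spec M A
  obtain ⟨B', hBB', hB'Z, hB', hB'card⟩ :=
    exists_basis_superset M (M.rank (A ∪ J)) B (hBA.trans Finset.subset_union_left) hB
      (Nat.sub_le _ _)
  have heAJ : e ∉ A ∪ J := by
    intro h
    rcases Finset.mem_union.mp h with h | h
    · exact heA h
    · exact heJ h
  -- insert e B' is dependent
  have heB'dep : ¬ M.Indep (insert e B') := by
    intro hind
    have heB : e ∉ B := fun h => heA (hBA h)
    have hBe : M.Indep (insert e B) :=
      M.indep_mono (Finset.insert_subset_insert e hBB') hind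
    have hle : (insert e B).card ≤ M.rank (insert e A) :=
      card_le_rank M (Finset.insert_subset_insert e hBA) hBe
    rw [Finset.card_insert_of_notMem heB, he.2, ← hBcard] at hle
    omega
  -- rank (insert e (A ∪ J)) = rank (A ∪ J)
  have hrins : M.rank (insert e (A ∪ J)) = M.rank (A ∪ J) := by
    refine le_antisymm ?_
      (le_csSup (rank_set_bdd M _) ⟨B', hB'Z.trans (Finset.subset_insert _ _), hB', hB'card⟩)
    obtain ⟨K, hKZ, hK, hKcard⟩ := rank_spec M (insert e (A ∪ J))
    rw [← hKcard, ← hB'card]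
    by_contra hlt
    push_neg at hlt
    obtain ⟨x, hx, hxind⟩ := M.indep_exchange hB' hK hlt
    have hxK : x ∈ K := (Finset.mem_sdiff.mp hx).1
    have hxB' : x ∉ B' := (Finset.mem_sdiff.mp hx).2
    rcases Finset.mem_insert.mp (hKZ hxK) with h | h
    · exact heB'dep (h ▸ hxind)
    · have : (insert x B').card ≤ M.rank (A ∪ J) :=
        card_le_rank M (Finset.insert_subset h hB'Z) hxind
      rw [Finset.card_insert_of_notMem hxB'] at this
      omega
  -- but I ⊆ insert e (A ∪ J) with |I| = |J| + 1, contradiction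
  have hIsub : I ⊆ insert e (A ∪ J) := by
    intro x hxI
    by_cases hx : x = e
    · exact Finset.mem_insert.mpr (Or.inl hx)
    · exact Finset.mem_insert_of_mem (Finset.mem_union_right _
        (Finset.mem_erase.mpr ⟨hx, hxI⟩))
  have hIcard : I.card = J.card + 1 := by
    rw [hJ, Finset.card_erase_of_mem heI]
    have : 0 < I.card := Finset.card_pos.mpr ⟨e, heI⟩
    omega
  have := card_le_rank M hIsub hI
  rw [hrins, hrAJ, hIcard] at this
  omega

end StmtAux

theorem stmt3 {α : Type} [DecidableEq α] (M : FinMatroid α) (w : α → ℝ)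
    (hw : ∀ e, 0 ≤ w e) (S : Finset α) (hSE : S ⊆ M.E)
    (hspan : ∀ e ∈ M.E, e ∉ S → e ∈ M.spn (S.filter fun f => w e ≤ w f))
    (T : Finset α) (hTS : T ⊆ S) (hT : M.Indep T)
    (hmaxS : ∀ X ⊆ S, M.Indep X → ∑ e ∈ X, w e ≤ ∑ e ∈ T, w e) :
    ∀ X, M.Indep X → ∑ e ∈ X, w e ≤ ∑ e ∈ T, w e := by
  suffices h : ∀ n X, M.Indep X → (X \ S).card ≤ n → ∑ e ∈ X, w e ≤ ∑ e ∈ T, w e by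
    intro X hX
    exact h (X \ S).card X hX le_rfl
  intro n
  induction n with
  | zero =>
    intro X hX hcard
    have : X ⊆ S := by
      intro x hx
      by_contra hxS
      have : x ∈ X \ S := Finset.mem_sdiff.mpr ⟨hx, hxS⟩
      have := Finset.card_pos.mpr ⟨x, this⟩
      omega
    exact hmaxS X this hX
  | succ n ih =>
    intro X hX hcard
    by_cases hXS : X ⊆ S
    · exact hmaxS X hXS hX
    · obtain ⟨e, heX, heS⟩ := Finset.not_subset.mp hXS
      have heE : e ∈ M.E := M.subset_ground hX heX
      set A := S.filter (fun f => w e ≤ w f) with hA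
      have heA : e ∉ A := fun h => heS (Finset.mem_filter.mp h).1
      have hespn : e ∈ M.spn A := hspan e heE heS
      obtain ⟨a, haA, haX, haind⟩ := StmtAux.replace M hX heX heA hespn
      have haS : a ∈ S := (Finset.mem_filter.mp haA).1
      have hwa : w e ≤ w a := (Finset.mem_filter.mp haA).2
      have haJ : a ∉ X.erase e := fun h => haX (Finset.erase_subset e X h)
      -- sum comparison
      have hsum : ∑ x ∈ X, w x ≤ ∑ x ∈ insert a (X.erase e), w x := by
        rw [Finset.sum_insert haJ, ← Finset.add_sum_erase X w heX]
        linarith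
      -- card of new difference
      have hdiff : (insert a (X.erase e)) \ S ⊆ (X \ S).erase e := by
        intro x hx
        obtain ⟨hx1, hx2⟩ := Finset.mem_sdiff.mp hx
        rcases Finset.mem_insert.mp hx1 with h | h
        · exact absurd (h ▸ haS) hx2
        · obtain ⟨hxe, hxX⟩ := Finset.mem_erase.mp h
          exact Finset.mem_erase.mpr ⟨hxe, Finset.mem_sdiff.mpr ⟨hxX, hx2⟩⟩
      have heXS : e ∈ X \ S := Finset.mem_sdiff.mpr ⟨heX, heS⟩
      have hcard' : ((insert a (X.erase e)) \ S).card ≤ n := by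
        have h1 := Finset.card_le_card hdiff
        have h2 : ((X \ S).erase e).card = (X \ S).card - 1 :=
          Finset.card_erase_of_mem heXS
        have h3 : 0 < (X \ S).card := Finset.card_pos.mpr ⟨e, heXS⟩
        omega
      exact hsum.trans (ih (insert a (X.erase e)) haind hcard')
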